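/- Let ⟨[0,1], ⊕_p⟩ be a convex algebra satisfying (MO) and (LC). Then a one-sided cancellation law holds: for all x, y, z ∈ [0,1] and p ∈ (0,1), if x ⊕_p z = y ⊕_p z, z ≤ x and z ≤ y, then x = y. -/

import Mathlib

open Set Filter Topology

/-- A convex algebra on the interval `[0,1] ⊆ ℝ`: `op p x y` denotes `x ⊕_p y`,
for `p ∈ (0,1)`, extended to `p ∈ [0,1]` by the projection axioms
`x ⊕_1 y = x` and `x ⊕_0 y = y`.  All axioms are required only on `[0,1]`;
values of `op` outside `[0,1]` are irrelevant. -/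
structure UCA where
  op : ℝ → ℝ → ℝ → ℝ
  mem : ∀ p ∈ Set.Icc (0:ℝ) 1, ∀ x ∈ Set.Icc (0:ℝ) 1, ∀ y ∈ Set.Icc (0:ℝ) 1,
      op p x y ∈ Set.Icc (0:ℝ) 1
  idem : ∀ p ∈ Set.Ioo (0:ℝ) 1, ∀ x ∈ Set.Icc (0:ℝ) 1, op p x x = x
  comm : ∀ p ∈ Set.Ioo (0:ℝ) 1, ∀ x ∈ Set.Icc (0:ℝ) 1, ∀ y ∈ Set.Icc (0:ℝ) 1,
      op p x y = op (1 - p) y x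
  assoc : ∀ p ∈ Set.Ioo (0:ℝ) 1, ∀ q ∈ Set.Ioo (0:ℝ) 1,
      ∀ x ∈ Set.Icc (0:ℝ) 1, ∀ y ∈ Set.Icc (0:ℝ) 1, ∀ z ∈ Set.Icc (0:ℝ) 1,
      op q (op p x y) z = op (p * q) x (op ((1 - p) * q / (1 - p * q)) y z)
  proj1 : ∀ x ∈ Set.Icc (0:ℝ) 1, ∀ y ∈ Set.Icc (0:ℝ) 1, op 1 x y = x
  proj0 : ∀ x ∈ Set.Icc (0:ℝ) 1, ∀ y ∈ Set.Icc (0:ℝ) 1, op 0 x y = y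

/-- Monotonicity (MO): `x ≤ x'` implies `x ⊕_p y ≤ x' ⊕_p y`. -/
def UCA.MO (A : UCA) : Prop :=
  ∀ x ∈ Set.Icc (0:ℝ) 1, ∀ x' ∈ Set.Icc (0:ℝ) 1, ∀ y ∈ Set.Icc (0:ℝ) 1,
    ∀ p ∈ Set.Ioo (0:ℝ) 1, x ≤ x' → A.op p x y ≤ A.op p x' y

/-- (UC): for `x, y ∈ [0,1)` and `p ∈ (0,1)`,
`limsup_{ε→0⁺} ((x+ε) ⊕_p (y+ε)) ≤ x ⊕_p y`. -/
def UCA.UC (A : UCA) : Prop :=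
  ∀ x ∈ Set.Ico (0:ℝ) 1, ∀ y ∈ Set.Ico (0:ℝ) 1, ∀ p ∈ Set.Ioo (0:ℝ) 1,
    Filter.limsup (fun ε => A.op p (x + ε) (y + ε)) (𝓝[>] (0:ℝ)) ≤ A.op p x y

/-- (LC): for `x ≤ y` in `[0,1]`, `liminf_{p→1⁻} (y ⊕_p x) ≥ y`. -/
def UCA.LC (A : UCA) : Prop :=
  ∀ x ∈ Set.Icc (0:ℝ) 1, ∀ y ∈ Set.Icc (0:ℝ) 1, x ≤ y →
    y ≤ Filter.liminf (fun p => A.op p y x) (𝓝[<] (1:ℝ))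

/-- `y ⊳ x` : `y` eats `x`, i.e. `y ⊕_t x = y` for all `t ∈ (0,1]`. -/
def UCA.Eats (A : UCA) (y x : ℝ) : Prop :=
  ∀ t ∈ Set.Ioc (0:ℝ) 1, A.op t y x = y

/-- `E^⊕ = { y ∈ [0,1] : y ⊳ 0 }`. -/
def UCA.E (A : UCA) : Set ℝ := {y ∈ Set.Icc (0:ℝ) 1 | A.Eats y 0}

/-- `V_{x,y} = inf { y ⊕_p x : p ∈ (0,1] }`. -/
noncomputable def UCA.V (A : UCA) (x y : ℝ) : ℝ :=
  sInf ((fun p => A.op p y x) '' Set.Ioc (0:ℝ) 1)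

section Aux

variable (A : UCA)

private lemma memI {p a b : ℝ} (hp : p ∈ Set.Ioo (0:ℝ) 1) (ha : a ∈ Set.Icc (0:ℝ) 1)
    (hb : b ∈ Set.Icc (0:ℝ) 1) : A.op p a b ∈ Set.Icc (0:ℝ) 1 :=
  A.mem p (Set.Ioo_subset_Icc_self hp) a ha b hb

private lemma rmono (hMO : A.MO) {p a b b' : ℝ} (hp : p ∈ Set.Ioo (0:ℝ) 1)
    (ha : a ∈ Set.Icc (0:ℝ) 1) (hb : b ∈ Set.Icc (0:ℝ) 1) (hb' : b' ∈ Set.Icc (0:ℝ) 1)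
    (h : b ≤ b') : A.op p a b ≤ A.op p a b' := by
  have h1p : (1:ℝ) - p ∈ Set.Ioo (0:ℝ) 1 := ⟨by linarith [hp.2], by linarith [hp.1]⟩
  rw [A.comm p hp a ha b hb, A.comm p hp a ha b' hb']
  exact hMO b hb b' hb' a ha (1-p) h1p h

/-- `a ⊕_u (a ⊕_P z) = a ⊕_{u + P(1-u)} z`. -/
private lemma pow2 {a z u P : ℝ} (ha : a ∈ Set.Icc (0:ℝ) 1) (hz : z ∈ Set.Icc (0:ℝ) 1)
    (hu : u ∈ Set.Ioo (0:ℝ) 1) (hP : P ∈ Set.Ioo (0:ℝ) 1) :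
    A.op u a (A.op P a z) = A.op (u + P*(1-u)) a z := by
  have hq : u + P*(1-u) ∈ Set.Ioo (0:ℝ) 1 :=
    ⟨by nlinarith [hu.1, hP.1, hu.2], by nlinarith [hu.2, hP.2]⟩
  have hq0 : u + P*(1-u) ≠ 0 := ne_of_gt hq.1
  have hp' : u/(u + P*(1-u)) ∈ Set.Ioo (0:ℝ) 1 :=
    ⟨div_pos hu.1 hq.1, (div_lt_one hq.1).2 (by nlinarith [hP.1, hu.2])⟩
  have h := A.assoc (u/(u + P*(1-u))) hp' (u + P*(1-u)) hq a ha a ha z hz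
  rw [A.idem (u/(u + P*(1-u))) hp' a ha] at h
  have e1 : u/(u + P*(1-u)) * (u + P*(1-u)) = u := div_mul_cancel₀ u hq0
  have h1u : (1:ℝ) - u ≠ 0 := by have := hu.2; intro hc; linarith [sub_eq_zero.mp hc]
  rw [e1] at h
  have e2 : (1 - u/(u + P*(1-u))) * (u + P*(1-u)) / (1 - u) = P := by
    have h3 : (1 - u/(u + P*(1-u))) * (u + P*(1-u)) = P * (1-u) := by
      field_simp
      ring
    rw [h3, mul_div_assoc, div_self h1u, mul_one]
  rw [e2] at h
  exact h.symm

/-- `a ⊕_t (b ⊕_P z) = (a ⊕_{t/Q} b) ⊕_Q z` with `Q = t + P(1-t)`. -/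
private lemma comb {a b z t P : ℝ} (ha : a ∈ Set.Icc (0:ℝ) 1) (hb : b ∈ Set.Icc (0:ℝ) 1)
    (hz : z ∈ Set.Icc (0:ℝ) 1) (ht : t ∈ Set.Ioo (0:ℝ) 1) (hP : P ∈ Set.Ioo (0:ℝ) 1) :
    A.op t a (A.op P b z) = A.op (t + P*(1-t)) (A.op (t/(t + P*(1-t))) a b) z := by
  have hq : t + P*(1-t) ∈ Set.Ioo (0:ℝ) 1 :=
    ⟨by nlinarith [ht.1, hP.1, ht.2], by nlinarith [ht.2, hP.2]⟩
  have hq0 : t + P*(1-t) ≠ 0 := ne_of_gt hq.1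
  have hp' : t/(t + P*(1-t)) ∈ Set.Ioo (0:ℝ) 1 :=
    ⟨div_pos ht.1 hq.1, (div_lt_one hq.1).2 (by nlinarith [hP.1, ht.2])⟩
  have h := A.assoc (t/(t + P*(1-t))) hp' (t + P*(1-t)) hq a ha b hb z hz
  have e1 : t/(t + P*(1-t)) * (t + P*(1-t)) = t := div_mul_cancel₀ t hq0
  have h1t : (1:ℝ) - t ≠ 0 := by have := ht.2; intro hc; linarith [sub_eq_zero.mp hc]
  rw [e1] at h
  have e2 : (1 - t/(t + P*(1-t))) * (t + P*(1-t)) / (1 - t) = P := by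
    have h3 : (1 - t/(t + P*(1-t))) * (t + P*(1-t)) = P * (1-t) := by
      field_simp
      ring
    rw [h3, mul_div_assoc, div_self h1t, mul_one]
  rw [e2] at h
  exact h.symm

/-- `(x ⊕_p z) ⊕_v z = x ⊕_{pv} z`. -/
private lemma down {x z p v : ℝ} (hx : x ∈ Set.Icc (0:ℝ) 1) (hz : z ∈ Set.Icc (0:ℝ) 1)
    (hp : p ∈ Set.Ioo (0:ℝ) 1) (hv : v ∈ Set.Ioo (0:ℝ) 1) :
    A.op v (A.op p x z) z = A.op (p*v) x z := by
  have hr : (1-p)*v/(1-p*v) ∈ Set.Ioo (0:ℝ) 1 := by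
    constructor
    · apply div_pos (by nlinarith [hp.2, hv.1]) (by nlinarith [hp.1, hp.2, hv.1, hv.2])
    · rw [div_lt_one (by nlinarith [hp.1, hp.2, hv.1, hv.2])]
      nlinarith [hp.1, hv.2]
  have h := A.assoc p hp v hv x hx z hz z hz
  rw [A.idem _ hr z hz] at h
  exact h

private lemma ratioIoo {s v : ℝ} (hs : s ∈ Set.Ioo (0:ℝ) 1) (hv : v ∈ Set.Ioo (0:ℝ) 1) :
    (1-s)*v/(1-s*v) ∈ Set.Ioo (0:ℝ) 1 := by
  have hd : (0:ℝ) < 1 - s*v := by nlinarith [hs.1, hs.2, hv.1, hv.2]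
  constructor
  · exact div_pos (mul_pos (by linarith [hs.2]) hv.1) hd
  · rw [div_lt_one hd]; nlinarith [hs.1, hv.2]

private lemma aux (hMO : A.MO) (hLC : A.LC) {x y z p : ℝ}
    (hx : x ∈ Set.Icc (0:ℝ) 1) (hy : y ∈ Set.Icc (0:ℝ) 1) (hz : z ∈ Set.Icc (0:ℝ) 1)
    (hp : p ∈ Set.Ioo (0:ℝ) 1) (Hp : A.op p x z = A.op p y z)
    (hzx : z ≤ x) (hzy : z ≤ y) (hxy : x ≤ y) : y ≤ x := by
  have hIoo1 : Set.Ioo (0:ℝ) 1 ∈ 𝓝[<] (1:ℝ) :=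
    Ioo_mem_nhdsLT_of_mem (show (1:ℝ) ∈ Set.Ioc 0 1 from ⟨zero_lt_one, le_refl 1⟩)
  have hxw : ∀ t ∈ Set.Ioo (0:ℝ) 1, x ≤ A.op t y x := by
    intro t ht
    have h := hMO x hx y hy x hx t ht hxy
    rwa [A.idem t ht x hx] at h
  have hwI : ∀ t ∈ Set.Ioo (0:ℝ) 1, A.op t y x ∈ Set.Icc (0:ℝ) 1 := fun t ht => memI A ht hy hx
  have hople : ∀ (a q : ℝ), a ∈ Set.Icc (0:ℝ) 1 → q ∈ Set.Ioo (0:ℝ) 1 → z ≤ a →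
      A.op q a z ≤ a := by
    intro a q ha hq hza
    have h := rmono A hMO hq ha hz ha hza
    rwa [A.idem q hq a ha] at h
  -- (y ⊕_t x) ⊕_p z = x ⊕_p z
  have wment : ∀ t ∈ Set.Ioo (0:ℝ) 1, A.op p (A.op t y x) z = A.op p x z := by
    intro t ht
    have htp : t*p ∈ Set.Ioo (0:ℝ) 1 := ⟨mul_pos ht.1 hp.1, by nlinarith [ht.2, hp.2, hp.1]⟩
    have hdtp : (0:ℝ) < 1 - t*p := by linarith [htp.2]
    have hv : (1-t)/(1-t*p) ∈ Set.Ioo (0:ℝ) 1 := by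
      constructor
      · exact div_pos (by linarith [ht.2]) hdtp
      · rw [div_lt_one hdtp]; nlinarith [ht.1, hp.2]
    have hr : (1-t)*p/(1-t*p) ∈ Set.Ioo (0:ℝ) 1 := ratioIoo ht hp
    have h := A.assoc t ht p hp y hy x hx z hz
    have hrp : (1-t)*p/(1-t*p) = p*((1-t)/(1-t*p)) := by ring
    have hxr : A.op ((1-t)*p/(1-t*p)) x z = A.op ((1-t)*p/(1-t*p)) y z := by
      rw [hrp, ← down A hx hz hp hv, Hp, down A hy hz hp hv]
    rw [hxr] at h
    have h2 := pow2 A hy hz htp hr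
    have hden : (1:ℝ) - t*p ≠ 0 := ne_of_gt hdtp
    have e : t*p + ((1-t)*p/(1-t*p))*(1-t*p) = p := by
      rw [div_mul_cancel₀ _ hden]; ring
    rw [e] at h2
    rw [h2, ← Hp] at h
    exact h
  -- key identity
  have key1 : ∀ t ∈ Set.Ioo (0:ℝ) 1, ∀ q, p < q → q < 1 →
      A.op q (A.op t y x) z = A.op q (A.op (t*((q-p)/((1-p)*q))) y x) z := by
    intro t ht q hpq hq1
    have hq : q ∈ Set.Ioo (0:ℝ) 1 := ⟨lt_trans hp.1 hpq, hq1⟩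
    have h1p : (0:ℝ) < 1 - p := by linarith [hp.2]
    have h1p' : (1:ℝ) - p ≠ 0 := ne_of_gt h1p
    have hq0 : q ≠ 0 := ne_of_gt hq.1
    have hu : (q-p)/(1-p) ∈ Set.Ioo (0:ℝ) 1 :=
      ⟨div_pos (by linarith) h1p, (div_lt_one h1p).2 (by linarith)⟩
    set u := (q-p)/(1-p) with hudef
    have e0 : u + p*(1-u) = q := by
      rw [hudef]; field_simp <;> ring
    have htu : t*u ∈ Set.Ioo (0:ℝ) 1 := ⟨mul_pos ht.1 hu.1, by nlinarith [ht.2, hu.2, hu.1]⟩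
    have hdtu : (0:ℝ) < 1 - t*u := by linarith [htu.2]
    have hdtu' : (1:ℝ) - t*u ≠ 0 := ne_of_gt hdtu
    have hρ : (1-t)*u/(1-t*u) ∈ Set.Ioo (0:ℝ) 1 := ratioIoo ht hu
    have hq' : (1-t)*u/(1-t*u) + p*(1 - (1-t)*u/(1-t*u)) ∈ Set.Ioo (0:ℝ) 1 := by
      constructor
      · nlinarith [hρ.1, hρ.2, hp.1]
      · nlinarith [hρ.1, hρ.2, hp.2, hp.1]
    have hw := hwI t ht
    have hc : A.op p x z ∈ Set.Icc (0:ℝ) 1 := memI A hp hx hz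
    have s1 : A.op q (A.op t y x) z = A.op u (A.op t y x) (A.op p (A.op t y x) z) := by
      rw [pow2 A hw hz hu hp, e0]
    have s3 := A.assoc t ht u hu y hy x hx (A.op p x z) hc
    have s4 := pow2 A hx hz hρ hp
    have s5 := comb A hy hx hz htu hq'
    have hQ : t*u + ((1-t)*u/(1-t*u) + p*(1 - (1-t)*u/(1-t*u)))*(1-t*u) = q := by
      rw [← e0]; field_simp <;> ring
    rw [hQ] at s5
    have eκ : t*u/q = t*((q-p)/((1-p)*q)) := by
      rw [hudef]; field_simp <;> ring
    rw [eκ] at s5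
    calc A.op q (A.op t y x) z
        = A.op u (A.op t y x) (A.op p (A.op t y x) z) := s1
      _ = A.op u (A.op t y x) (A.op p x z) := by rw [wment t ht]
      _ = A.op (t*u) y (A.op ((1-t)*u/(1-t*u)) x (A.op p x z)) := s3
      _ = A.op (t*u) y (A.op ((1-t)*u/(1-t*u) + p*(1-(1-t)*u/(1-t*u))) x z) := by rw [s4]
      _ = A.op q (A.op (t*((q-p)/((1-p)*q))) y x) z := s5
  have hκI : ∀ q, p < q → q < 1 → (q-p)/((1-p)*q) ∈ Set.Ioo (0:ℝ) 1 := by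
    intro q hpq hq1
    have h1p : (0:ℝ) < 1 - p := by linarith [hp.2]
    have hq0 : (0:ℝ) < q := lt_trans hp.1 hpq
    constructor
    · exact div_pos (by linarith) (mul_pos h1p hq0)
    · rw [div_lt_one (mul_pos h1p hq0)]; nlinarith [hp.1]
  have keyn : ∀ q, p < q → q < 1 → ∀ t ∈ Set.Ioo (0:ℝ) 1, ∀ n : ℕ,
      A.op q (A.op t y x) z = A.op q (A.op (t*((q-p)/((1-p)*q))^n) y x) z := by
    intro q hpq hq1 t ht n
    have hκ := hκI q hpq hq1
    induction n with
    | zero => simp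
    | succ n ih =>
      have htn : t*((q-p)/((1-p)*q))^n ∈ Set.Ioo (0:ℝ) 1 := by
        constructor
        · exact mul_pos ht.1 (pow_pos hκ.1 n)
        · have h1 : ((q-p)/((1-p)*q))^n ≤ 1 := pow_le_one₀ hκ.1.le hκ.2.le
          nlinarith [ht.1, ht.2, pow_pos hκ.1 n]
      calc A.op q (A.op t y x) z
          = A.op q (A.op (t*((q-p)/((1-p)*q))^n) y x) z := ih
        _ = A.op q (A.op (t*((q-p)/((1-p)*q))^n*((q-p)/((1-p)*q))) y x) z :=
            key1 _ htn q hpq hq1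
        _ = A.op q (A.op (t*((q-p)/((1-p)*q))^(n+1)) y x) z := by
            rw [pow_succ, ← mul_assoc]
  -- parameter monotonicity
  have pmono : ∀ σ s, σ ∈ Set.Ioo (0:ℝ) 1 → s ∈ Set.Ioo (0:ℝ) 1 → σ ≤ s →
      A.op σ y x ≤ A.op s y x := by
    intro σ s hσ hs hσs
    rcases eq_or_lt_of_le hσs with rfl | hlt
    · exact le_refl _
    · have hv : σ/s ∈ Set.Ioo (0:ℝ) 1 := ⟨div_pos hσ.1 hs.1, (div_lt_one hs.1).2 hlt⟩
      have hws := hwI s hs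
      have h := A.assoc s hs (σ/s) hv y hy x hx x hx
      have hr : (1-s)*(σ/s)/(1-s*(σ/s)) ∈ Set.Ioo (0:ℝ) 1 := ratioIoo hs hv
      rw [A.idem _ hr x hx] at h
      have e : s*(σ/s) = σ := by rw [mul_comm, div_mul_cancel₀ _ (ne_of_gt hs.1)]
      rw [e] at h
      rw [← h]
      have hb := rmono A hMO hv hws hx hws (hxw s hs)
      rwa [A.idem _ hv _ hws] at hb
  -- the infimum of w
  set m := sInf ((fun s => A.op s y x) '' Set.Ioo (0:ℝ) 1) with hmdef
  have hhalf : (1:ℝ)/2 ∈ Set.Ioo (0:ℝ) 1 := by norm_num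
  have hne : ((fun s => A.op s y x) '' Set.Ioo (0:ℝ) 1).Nonempty := ⟨_, ⟨(1:ℝ)/2, hhalf, rfl⟩⟩
  have hbdd : BddBelow ((fun s => A.op s y x) '' Set.Ioo (0:ℝ) 1) := by
    refine ⟨0, ?_⟩
    rintro e ⟨s, hs, rfl⟩
    exact (hwI s hs).1
  have hxm : x ≤ m := le_csInf hne (by rintro e ⟨s, hs, rfl⟩; exact hxw s hs)
  have hmle : ∀ s ∈ Set.Ioo (0:ℝ) 1, m ≤ A.op s y x := fun s hs => csInf_le hbdd ⟨s, hs, rfl⟩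
  have hmI : m ∈ Set.Icc (0:ℝ) 1 :=
    ⟨le_trans hx.1 hxm, le_trans (hmle _ hhalf) (hwI _ hhalf).2⟩
  have hmid : ∀ q, p < q → q < 1 → A.op q m z ≤ x := by
    intro q hpq hq1
    have hq : q ∈ Set.Ioo (0:ℝ) 1 := ⟨lt_trans hp.1 hpq, hq1⟩
    have h1p : (0:ℝ) < 1 - p := by linarith [hp.2]
    have h1p' : (1:ℝ) - p ≠ 0 := ne_of_gt h1p
    have hu : (q-p)/(1-p) ∈ Set.Ioo (0:ℝ) 1 :=
      ⟨div_pos (by linarith) h1p, (div_lt_one h1p).2 (by linarith)⟩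
    set u := (q-p)/(1-p) with hudef
    have e0 : u + p*(1-u) = q := by
      rw [hudef]; field_simp <;> ring
    have s2 := comb A hx hy hz hu hp
    rw [e0] at s2
    have huq : u/q ∈ Set.Ioo (0:ℝ) 1 := by
      constructor
      · exact div_pos hu.1 hq.1
      · rw [div_lt_one hq.1, hudef, div_lt_iff₀ h1p]
        nlinarith [hp.1]
    have hσ : 1 - u/q ∈ Set.Ioo (0:ℝ) 1 := ⟨by linarith [huq.2], by linarith [huq.1]⟩
    have s3 : A.op (u/q) x y = A.op (1-u/q) y x := A.comm (u/q) huq x hx y hy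
    have hident : A.op q x z = A.op q (A.op (1-u/q) y x) z := by
      calc A.op q x z = A.op u x (A.op p x z) := by rw [pow2 A hx hz hu hp, e0]
        _ = A.op u x (A.op p y z) := by rw [Hp]
        _ = A.op q (A.op (u/q) x y) z := s2
        _ = A.op q (A.op (1-u/q) y x) z := by rw [s3]
    have hb1 : A.op q m z ≤ A.op q (A.op (1-u/q) y x) z :=
      hMO m hmI _ (hwI _ hσ) z hz q hq (hmle _ hσ)
    rw [← hident] at hb1
    exact le_trans hb1 (hople x q hx hq hzx)
  have hzm : z ≤ m := le_trans hzx hxm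
  have hmx : m ≤ x := by
    have hLCm := hLC z hz m hmI hzm
    have hev : ∀ᶠ q in 𝓝[<] (1:ℝ), A.op q m z ≤ x := by
      filter_upwards [Ioo_mem_nhdsLT_of_mem (show (1:ℝ) ∈ Set.Ioc p 1 from ⟨hp.2, le_refl 1⟩)]
        with q hq
      exact hmid q hq.1 hq.2
    have hbd : Filter.IsBoundedUnder (· ≥ ·) (𝓝[<] (1:ℝ)) (fun q => A.op q m z) := by
      refine ⟨0, ?_⟩
      rw [Filter.eventually_map]
      filter_upwards [hIoo1] with q hq
      exact (memI A hq hmI hz).1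
    exact le_trans hLCm (Filter.liminf_le_of_frequently_le hev.frequently hbd)
  -- w_t ⊕_q z ≤ x for all q
  have hwqx : ∀ t ∈ Set.Ioo (0:ℝ) 1, ∀ q ∈ Set.Ioo (0:ℝ) 1, A.op q (A.op t y x) z ≤ x := by
    intro t ht q hq
    rcases lt_trichotomy q p with hlt | heq | hgt
    · have hv : q/p ∈ Set.Ioo (0:ℝ) 1 := ⟨div_pos hq.1 hp.1, (div_lt_one hp.1).2 hlt⟩
      have e : p*(q/p) = q := by rw [mul_comm, div_mul_cancel₀ _ (ne_of_gt hp.1)]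
      have h1 : A.op q (A.op t y x) z = A.op q x z := by
        rw [← e, ← down A (hwI t ht) hz hp hv, wment t ht, down A hx hz hp hv]
      rw [h1]
      exact hople x q hx hq hzx
    · subst heq
      rw [wment t ht]
      exact hople x q hx hq hzx
    · have hκ := hκI q hgt hq.2
      have hstep : ∀ ε : ℝ, 0 < ε → A.op q (A.op t y x) z ≤ x + ε := by
        intro ε hε
        obtain ⟨w', hw', hlt'⟩ := exists_lt_of_csInf_lt hne (show m < x + ε by linarith)
        obtain ⟨s, hs, rfl⟩ := hw'
        obtain ⟨n, hn⟩ := exists_pow_lt_of_lt_one hs.1 hκ.2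
        have hκn1 : ((q-p)/((1-p)*q))^n ≤ 1 := pow_le_one₀ hκ.1.le hκ.2.le
        have htn : t*((q-p)/((1-p)*q))^n ∈ Set.Ioo (0:ℝ) 1 := by
          constructor
          · exact mul_pos ht.1 (pow_pos hκ.1 n)
          · nlinarith [ht.1, ht.2, pow_pos hκ.1 n]
        have hlt2 : t*((q-p)/((1-p)*q))^n < s :=
          lt_of_le_of_lt (mul_le_of_le_one_left (pow_pos hκ.1 n).le ht.2.le) hn
        calc A.op q (A.op t y x) z
            = A.op q (A.op (t*((q-p)/((1-p)*q))^n) y x) z := keyn q hgt hq.2 t ht n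
          _ ≤ A.op (t*((q-p)/((1-p)*q))^n) y x :=
              hople _ q (hwI _ htn) hq (le_trans hzx (hxw _ htn))
          _ ≤ A.op s y x := pmono _ s htn hs hlt2.le
          _ ≤ x + ε := hlt'.le
      by_contra hcon
      push_neg at hcon
      have := hstep ((A.op q (A.op t y x) z - x)/2) (by linarith)
      linarith
  -- conclude
  have hwle : ∀ t ∈ Set.Ioo (0:ℝ) 1, A.op t y x ≤ x := by
    intro t ht
    have hLCw := hLC z hz (A.op t y x) (hwI t ht) (le_trans hzx (hxw t ht))
    refine le_trans hLCw (Filter.liminf_le_of_frequently_le ?_ ?_)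
    · apply Filter.Eventually.frequently
      filter_upwards [hIoo1] with q hq
      exact hwqx t ht q hq
    · refine ⟨0, ?_⟩
      rw [Filter.eventually_map]
      filter_upwards [hIoo1] with q hq
      exact (memI A hq (hwI t ht) hz).1
  have hLCxy := hLC x hx y hy hxy
  refine le_trans hLCxy (Filter.liminf_le_of_frequently_le ?_ ?_)
  · apply Filter.Eventually.frequently
    filter_upwards [hIoo1] with t ht
    exact hwle t ht
  · refine ⟨0, ?_⟩
    rw [Filter.eventually_map]
    filter_upwards [hIoo1] with t ht
    exact (memI A ht hy hx).1

end Aux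

/-- Lemma 2.16: for a convex algebra on `[0,1]` satisfying (MO) and (LC), a one-sided
cancellation law holds: if `x ⊕_p z = y ⊕_p z`, `z ≤ x` and `z ≤ y`, then `x = y`. -/
theorem stmt_6 (A : UCA) (hMO : A.MO) (hLC : A.LC) :
    ∀ x ∈ Set.Icc (0:ℝ) 1, ∀ y ∈ Set.Icc (0:ℝ) 1, ∀ z ∈ Set.Icc (0:ℝ) 1,
      ∀ p ∈ Set.Ioo (0:ℝ) 1,
        A.op p x z = A.op p y z → z ≤ x → z ≤ y → x = y := by
  intro x hx y hy z hz p hp heq hzx hzy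
  rcases le_total x y with h | h
  · exact le_antisymm h (aux A hMO hLC hx hy hz hp heq hzx hzy h)
  · exact le_antisymm (aux A hMO hLC hy hx hz hp heq.symm hzy hzx h) h
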